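/- Extraction in the group: Let G be a commutative group, α ∈ G with orderOf α = q where q is prime, and let y, s₁, s₂, h₁, h₂ ∈ ZMod q. If α^((y*h₁+s₁).val) = α^((y*h₂+s₂).val) and h₁ ≠ h₂, then y = (s₂ - s₁) * (h₁ - h₂)⁻¹ in ZMod q. -/
import Mathlib


theorem key_extraction_in_group {G : Type*} [CommGroup G] (α : G) (q : ℕ) (hq : q.Prime)
    (hord : orderOf α = q) (y s₁ s₂ h₁ h₂ : ZMod q)
    (heq : α ^ (y * h₁ + s₁).val = α ^ (y * h₂ + s₂).val) (hne : h₁ ≠ h₂) :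
    y = (s₂ - s₁) * (h₁ - h₂)⁻¹ := by
  subst hord
  haveI : Fact (Nat.Prime (orderOf α)) := ⟨hq⟩
  have hmod : (y * h₁ + s₁).val ≡ (y * h₂ + s₂).val [MOD orderOf α] := by
    exact (pow_eq_pow_iff_modEq).mp heq
  have h : (y * h₁ + s₁) = (y * h₂ + s₂) :=
    ZMod.val_injective _ (Nat.ModEq.eq_of_lt_of_lt hmod (ZMod.val_lt _) (ZMod.val_lt _))
  have hsub : h₁ - h₂ ≠ 0 := sub_ne_zero.mpr hne
  field_simp
  linear_combination h
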